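/- (Theorem 5(iii), scenario H₂, order L.) Let L ≥ 1 be an integer and assume the perturbation conditions (D_L, E_L, H₂) hold. Then for every i ∈ {1, …, N} there exist real coefficients c̃_i[0], c̃_i[1], …, c̃_i[L] such that the conditional quasi-stationary probability satisfies π̃_i(ε) = Σ_{l=0}^{L} c̃_i[l] ε^l + õ_i(ε^L) for ε ∈ (0, ε₀], where õ_i(ε^L)/ε^L → 0 as ε → 0+, with c̃_i[0] > 0 for every i ∈ {1, …, N}, Σ_{i=1}^{N} c̃_i[0] = 1, and Σ_{i=1}^{N} c̃_i[l] = 0 for every l = 1, …, L. -/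

import Mathlib

open Filter Finset Topology

noncomputable section

/-- Two-term Laurent asymptotic expansion:
`f ε = c0 * ε^h + c1 * ε^(h+1) + o(ε^(h+1))` as `ε → 0+`. -/
def laurent2 (f : ℝ → ℝ) (h : ℤ) (c0 c1 : ℝ) : Prop :=
  Filter.Tendsto (fun ε : ℝ => (f ε - c0 * ε ^ h - c1 * ε ^ (h + 1)) / ε ^ (h + 1))
    (nhdsWithin 0 (Set.Ioi 0)) (nhds 0)

/-- `Γ_{i,j,σ}(ε) = p_{i,σ}(ε) p_{i+1,σ}(ε) ⋯ p_{j,σ}(ε)`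
(the sign σ is encoded by a `Bool`: `false` = −, `true` = +). -/
def Gam (p : ℕ → Bool → ℝ → ℝ) (σ : Bool) (i j : ℕ) (ε : ℝ) : ℝ :=
  ∏ m ∈ Finset.Icc i j, p m σ ε

/-- `e_i(ε) = e_{i,−}(ε) + e_{i,+}(ε)`. -/
def eT (e : ℕ → Bool → ℝ → ℝ) (i : ℕ) (ε : ℝ) : ℝ := e i false ε + e i true ε

/-- The expected return time
`E_{ii}(ε) = e_i(ε) + ∑_{k<i} e_k(ε) Γ_{k+1,i,−}(ε)/Γ_{k,i−1,+}(ε)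
            + ∑_{i<k≤N} e_k(ε) Γ_{i,k−1,+}(ε)/Γ_{i+1,k,−}(ε)`. -/
def ret (p e : ℕ → Bool → ℝ → ℝ) (N i : ℕ) (ε : ℝ) : ℝ :=
  eT e i ε
    + ∑ k ∈ Finset.range i, eT e k ε * (Gam p false (k + 1) i ε / Gam p true k (i - 1) ε)
    + ∑ k ∈ Finset.Icc (i + 1) N, eT e k ε * (Gam p true i (k - 1) ε / Gam p false (i + 1) k ε)

/-- The stationary probability `π_i(ε) = e_i(ε) / E_{ii}(ε)`. -/
def statPi (p e : ℕ → Bool → ℝ → ℝ) (N i : ℕ) (ε : ℝ) : ℝ := eT e i ε / ret p e N i ε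

/-- `b_i[l] = b_{i,−}[l] + b_{i,+}[l]`. -/
def bT (b : ℕ → Bool → ℕ → ℝ) (i l : ℕ) : ℝ := b i false l + b i true l

/-- Taylor asymptotic expansion of order `L`:
`f ε = c 0 + c 1 ε + ⋯ + c L ε^L + o(ε^L)` as `ε → 0+`. -/
def expN (f : ℝ → ℝ) (L : ℕ) (c : ℕ → ℝ) : Prop :=
  Filter.Tendsto (fun ε : ℝ => (f ε - ∑ l ∈ Finset.range (L + 1), c l * ε ^ l) / ε ^ L)
    (nhdsWithin 0 (Set.Ioi 0)) (nhds 0)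

/-- Asymptotic expansion `f ε = c 1 ε + c 2 ε² + ⋯ + c (L+1) ε^(L+1) + o(ε^(L+1))`
as `ε → 0+` (used at the asymptotically absorbing state in scenario H₂). -/
def expN1 (f : ℝ → ℝ) (L : ℕ) (c : ℕ → ℝ) : Prop :=
  Filter.Tendsto
    (fun ε : ℝ => (f ε - ∑ l ∈ Finset.Icc 1 (L + 1), c l * ε ^ l) / ε ^ (L + 1))
    (nhdsWithin 0 (Set.Ioi 0)) (nhds 0)

/-- The conditional quasi-stationary probability `π̃_i(ε) = π_i(ε) / ∑_{j=1}^{N} π_j(ε)`. -/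
def qPi (p e : ℕ → Bool → ℝ → ℝ) (N i : ℕ) (ε : ℝ) : ℝ :=
  statPi p e N i ε / ∑ j ∈ Finset.Icc 1 N, statPi p e N j ε

namespace Th5

/-- truncated power series -/
def P (L : ℕ) (c : ℕ → ℝ) (ε : ℝ) : ℝ := ∑ l ∈ Finset.range (L + 1), c l * ε ^ l

variable {L : ℕ} {f g : ℝ → ℝ} {c d : ℕ → ℝ}

lemma eps_pos_ev : ∀ᶠ ε in nhdsWithin (0:ℝ) (Set.Ioi 0), 0 < ε :=
  eventually_mem_of_tendsto_nhdsWithin tendsto_id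

lemma expN_congr (h : ∀ᶠ ε in nhdsWithin (0:ℝ) (Set.Ioi 0), f ε = g ε)
    (hf : expN f L c) : expN g L c := by
  refine hf.congr' (h.mono fun ε hε => ?_)
  simp [hε]

lemma expN_coeff_congr (h : ∀ l ≤ L, c l = d l) (hf : expN f L c) : expN f L d := by
  have : ∀ ε : ℝ, (∑ l ∈ Finset.range (L+1), c l * ε ^ l)
      = ∑ l ∈ Finset.range (L+1), d l * ε ^ l := by
    intro ε
    refine Finset.sum_congr rfl fun l hl => ?_
    rw [h l (Nat.lt_succ_iff.mp (Finset.mem_range.mp hl))]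
  unfold expN at hf ⊢
  simpa [this] using hf

lemma expN_o (hf : expN f L c)
    (h : Filter.Tendsto (fun ε : ℝ => (g ε - f ε) / ε ^ L)
      (nhdsWithin 0 (Set.Ioi 0)) (nhds 0)) : expN g L c := by
  have := h.add hf
  rw [add_zero] at this
  refine this.congr fun ε => ?_
  rw [← add_div, sub_add_sub_cancel]

lemma expN_add (hf : expN f L c) (hg : expN g L d) :
    expN (fun ε => f ε + g ε) L (fun l => c l + d l) := by
  have := hf.add hg
  rw [add_zero] at this
  refine this.congr fun ε => ?_
  rw [← add_div]
  congr 1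
  rw [Finset.sum_congr rfl (fun l _ => add_mul (c l) (d l) (ε ^ l)),
    Finset.sum_add_distrib]
  ring

lemma expN_zero : expN (fun _ => (0:ℝ)) L (fun _ => 0) := by
  unfold expN
  simpa using tendsto_const_nhds

lemma expN_const (r : ℝ) : expN (fun _ => r) L (fun l => if l = 0 then r else 0) := by
  unfold expN
  have : ∀ ε : ℝ, (∑ l ∈ Finset.range (L+1), (if l = 0 then r else 0) * ε ^ l) = r := by
    intro ε
    rw [Finset.sum_eq_single 0]
    · simp
    · intro l _ hl; simp [hl]
    · intro h; simp at h
  simpa [this] using tendsto_const_nhds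

lemma expN_sum {ι : Type*} {s : Finset ι} {F : ι → ℝ → ℝ} {C : ι → ℕ → ℝ}
    (h : ∀ i ∈ s, expN (F i) L (C i)) :
    expN (fun ε => ∑ i ∈ s, F i ε) L (fun l => ∑ i ∈ s, C i l) := by
  classical
  induction s using Finset.induction_on with
  | empty => simpa using expN_zero
  | @insert x s' hx ih =>
    simp only [Finset.sum_insert hx]
    exact expN_add (h x (Finset.mem_insert_self x s'))
      (ih fun i hi => h i (Finset.mem_insert_of_mem hi))

lemma P_tendsto (c : ℕ → ℝ) :
    Filter.Tendsto (P L c) (nhdsWithin (0:ℝ) (Set.Ioi 0)) (nhds (c 0)) := by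
  have hcont : Continuous (P L c) := by
    unfold P
    exact continuous_finset_sum _ fun l _ => continuous_const.mul (continuous_pow l)
  have h0 : P L c 0 = c 0 := by
    unfold P
    rw [Finset.sum_eq_single 0]
    · simp
    · intro l _ hl; simp [zero_pow hl]
    · intro h; simp at h
  simpa [h0] using (hcont.tendsto 0).mono_left nhdsWithin_le_nhds

lemma expN_tendsto (hf : expN f L c) :
    Filter.Tendsto f (nhdsWithin (0:ℝ) (Set.Ioi 0)) (nhds (c 0)) := by
  have hpow : Filter.Tendsto (fun ε : ℝ => ε ^ L) (nhdsWithin (0:ℝ) (Set.Ioi 0))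
      (nhds ((0:ℝ) ^ L)) :=
    ((continuous_pow L).tendsto 0).mono_left nhdsWithin_le_nhds
  have h1 := (hf.mul hpow).add (P_tendsto (L := L) c)
  rw [zero_mul, zero_add] at h1
  refine h1.congr' (eps_pos_ev.mono fun ε hε => ?_)
  have hne : ε ^ L ≠ 0 := pow_ne_zero _ (ne_of_gt hε)
  simp only [P]
  field_simp
  ring

lemma expN_poly (q : ℕ → ℝ) {M : ℕ} (hLM : L ≤ M) :
    expN (fun ε => ∑ l ∈ Finset.range (M + 1), q l * ε ^ l) L q := by
  unfold expN
  have key : ∀ ε : ℝ, 0 < ε →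
      ((∑ l ∈ Finset.range (M+1), q l * ε ^ l) - ∑ l ∈ Finset.range (L+1), q l * ε ^ l) / ε ^ L
        = ∑ l ∈ Finset.Ico (L+1) (M+1), q l * ε ^ (l - L) := by
    intro ε hε
    rw [← Finset.sum_Ico_eq_sub _ (by omega), Finset.sum_div]
    refine Finset.sum_congr rfl fun l hl => ?_
    have hl' := Finset.mem_Ico.mp hl
    rw [mul_div_assoc, pow_sub₀ ε (ne_of_gt hε) (by omega), div_eq_mul_inv]
  have hlim : Filter.Tendsto (fun ε : ℝ => ∑ l ∈ Finset.Ico (L+1) (M+1), q l * ε ^ (l - L))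
      (nhdsWithin (0:ℝ) (Set.Ioi 0)) (nhds 0) := by
    have hcont : Continuous (fun ε : ℝ => ∑ l ∈ Finset.Ico (L+1) (M+1), q l * ε ^ (l - L)) :=
      continuous_finset_sum _ fun l _ => continuous_const.mul (continuous_pow _)
    have h0 : (∑ l ∈ Finset.Ico (L+1) (M+1), q l * (0:ℝ) ^ (l - L)) = 0 := by
      refine Finset.sum_eq_zero fun l hl => ?_
      have hl' := Finset.mem_Ico.mp hl
      rw [zero_pow (by omega)]
      ring
    simpa [h0] using (hcont.tendsto 0).mono_left nhdsWithin_le_nhds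
  exact hlim.congr' (eps_pos_ev.mono fun ε hε => (key ε hε).symm) |>.congr
    fun ε => rfl

lemma expN_self_poly (c : ℕ → ℝ) : expN (P L c) L c := by
  unfold expN P
  simpa using tendsto_const_nhds

/-- Cauchy convolution -/
def conv (c d : ℕ → ℝ) (l : ℕ) : ℝ := ∑ m ∈ Finset.range (l + 1), c m * d (l - m)

lemma conv_zero (c d : ℕ → ℝ) : conv c d 0 = c 0 * d 0 := by simp [conv]

lemma expN_mul (hf : expN f L c) (hg : expN g L d) :
    expN (fun ε => f ε * g ε) L (conv c d) := by
  classical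
  set Pc : Polynomial ℝ := ∑ l ∈ Finset.range (L+1), Polynomial.C (c l) * Polynomial.X ^ l with hPc
  set Pd : Polynomial ℝ := ∑ l ∈ Finset.range (L+1), Polynomial.C (d l) * Polynomial.X ^ l with hPd
  have evalPc : ∀ x : ℝ, Pc.eval x = P L c x := by
    intro x; rw [hPc, Polynomial.eval_finset_sum]; unfold P
    refine Finset.sum_congr rfl fun l _ => ?_; simp
  have evalPd : ∀ x : ℝ, Pd.eval x = P L d x := by
    intro x; rw [hPd, Polynomial.eval_finset_sum]; unfold P
    refine Finset.sum_congr rfl fun l _ => ?_; simp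
  have coeffPc : ∀ n, Pc.coeff n = if n ≤ L then c n else 0 := by
    intro n
    rw [hPc, Polynomial.finset_sum_coeff]
    have : ∀ l ∈ Finset.range (L+1),
        (Polynomial.C (c l) * Polynomial.X ^ l).coeff n = if n = l then c l else 0 := by
      intro l _
      rw [Polynomial.coeff_C_mul, Polynomial.coeff_X_pow]
      split <;> simp_all
    rw [Finset.sum_congr rfl this, Finset.sum_ite_eq]
    simp [Nat.lt_succ_iff]
  have coeffPd : ∀ n, Pd.coeff n = if n ≤ L then d n else 0 := by
    intro n
    rw [hPd, Polynomial.finset_sum_coeff]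
    have : ∀ l ∈ Finset.range (L+1),
        (Polynomial.C (d l) * Polynomial.X ^ l).coeff n = if n = l then d l else 0 := by
      intro l _
      rw [Polynomial.coeff_C_mul, Polynomial.coeff_X_pow]
      split <;> simp_all
    rw [Finset.sum_congr rfl this, Finset.sum_ite_eq]
    simp [Nat.lt_succ_iff]
  have degPc : Pc.natDegree ≤ L :=
    Polynomial.natDegree_sum_le_of_forall_le _ _ fun l hl =>
      (Polynomial.natDegree_C_mul_X_pow_le (c l) l).trans
        (Nat.lt_succ_iff.mp (Finset.mem_range.mp hl))
  have degPd : Pd.natDegree ≤ L :=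
    Polynomial.natDegree_sum_le_of_forall_le _ _ fun l hl =>
      (Polynomial.natDegree_C_mul_X_pow_le (d l) l).trans
        (Nat.lt_succ_iff.mp (Finset.mem_range.mp hl))
  have degMul : (Pc * Pd).natDegree < 2*L + 1 :=
    Nat.lt_succ_of_le (Polynomial.natDegree_mul_le.trans (by omega))
  have hprod : ∀ x : ℝ, P L c x * P L d x
      = ∑ l ∈ Finset.range (2*L + 1), (Pc * Pd).coeff l * x ^ l := by
    intro x
    rw [← evalPc, ← evalPd, ← Polynomial.eval_mul,
      Polynomial.eval_eq_sum_range' degMul]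
  have hPP : expN (fun x => P L c x * P L d x) L (conv c d) := by
    have h1 : expN (fun x => P L c x * P L d x) L (fun l => (Pc * Pd).coeff l) := by
      have := expN_poly (L := L) (fun l => (Pc * Pd).coeff l) (M := 2*L) (by omega)
      refine expN_congr (Eventually.of_forall fun ε => ?_) this
      rw [hprod]
    refine expN_coeff_congr (fun l hl => ?_) h1
    rw [Polynomial.coeff_mul, Finset.Nat.sum_antidiagonal_eq_sum_range_succ_mk]
    unfold conv
    refine Finset.sum_congr rfl fun m hm => ?_
    have hm' := Nat.lt_succ_iff.mp (Finset.mem_range.mp hm)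
    rw [coeffPc, coeffPd, if_pos (hm'.trans hl), if_pos (by omega)]
  refine expN_o hPP ?_
  have h1 := ((expN_tendsto hf).mul hg).add (hf.mul (P_tendsto (L := L) d))
  rw [mul_zero, zero_mul, add_zero] at h1
  refine h1.congr fun ε => ?_
  simp only [P]
  rw [mul_div_assoc', div_mul_eq_mul_div, ← add_div]
  congr 1
  ring

/-- coefficients of the multiplicative inverse series -/
def invc (c : ℕ → ℝ) : ℕ → ℝ
  | 0 => (c 0)⁻¹
  | (n+1) => -(c 0)⁻¹ * ∑ m ∈ (Finset.range (n+1)).attach,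
      c (n + 1 - m.1) * invc c m.1
  decreasing_by exact Finset.mem_range.mp m.2

lemma invc_zero (c : ℕ → ℝ) : invc c 0 = (c 0)⁻¹ := by rw [invc]

lemma invc_succ (c : ℕ → ℝ) (n : ℕ) :
    invc c (n+1) = -(c 0)⁻¹ * ∑ m ∈ Finset.range (n+1), c (n + 1 - m) * invc c m := by
  rw [invc, Finset.sum_attach (Finset.range (n+1)) (fun m => c (n + 1 - m) * invc c m)]

lemma conv_invc (hc : c 0 ≠ 0) : ∀ l, conv c (invc c) l = if l = 0 then 1 else 0 := by
  intro l
  match l with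
  | 0 => simp [conv, invc_zero, mul_inv_cancel₀ hc]
  | (n+1) =>
    rw [if_neg (Nat.succ_ne_zero n)]
    unfold conv
    rw [Finset.sum_range_succ']
    have h1 : ∀ m ∈ Finset.range (n+1),
        c (m+1) * invc c (n + 1 - (m+1)) = c (m+1) * invc c (n - m) := by
      intro m hm; congr 2; omega
    rw [Finset.sum_congr rfl h1]
    have h2 : (∑ m ∈ Finset.range (n+1), c (m+1) * invc c (n - m))
        = ∑ m ∈ Finset.range (n+1), c (n + 1 - m) * invc c m := by
      rw [← Finset.sum_range_reflect (fun m => c (n + 1 - m) * invc c m) (n+1)]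
      refine Finset.sum_congr rfl fun m hm => ?_
      have hm' := Finset.mem_range.mp hm
      congr 2 <;> omega
    rw [h2]
    simp only [Nat.sub_zero]
    rw [invc_succ]
    field_simp
    ring

lemma expN_inv (hc : c 0 ≠ 0) (hf : expN f L c) :
    expN (fun ε => (f ε)⁻¹) L (invc c) := by
  have hft : Filter.Tendsto f (nhdsWithin (0:ℝ) (Set.Ioi 0)) (nhds (c 0)) := expN_tendsto hf
  have hne : ∀ᶠ ε in nhdsWithin (0:ℝ) (Set.Ioi 0), f ε ≠ 0 := hft.eventually_ne hc
  have hmul : expN (fun ε => f ε * P L (invc c) ε) L (conv c (invc c)) :=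
    expN_mul hf (expN_self_poly (invc c))
  have hmul1 : expN (fun ε => f ε * P L (invc c) ε) L (fun l => if l = 0 then 1 else 0) :=
    expN_coeff_congr (fun l _ => conv_invc hc l) hmul
  -- hence (f * P_inv - 1)/ε^L → 0
  have h1 : Filter.Tendsto (fun ε : ℝ => (f ε * P L (invc c) ε - 1) / ε ^ L)
      (nhdsWithin (0:ℝ) (Set.Ioi 0)) (nhds 0) := by
    have := hmul1
    unfold expN at this
    have hP1 : ∀ ε : ℝ, (∑ l ∈ Finset.range (L+1), (if l = 0 then (1:ℝ) else 0) * ε ^ l) = 1 := by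
      intro ε
      rw [Finset.sum_eq_single 0]
      · simp
      · intro l _ hl; simp [hl]
      · intro h; simp at h
    simpa [hP1] using this
  refine expN_o (expN_self_poly (invc c)) ?_
  have h2 := ((hft.inv₀ hc).neg.mul h1)
  rw [mul_zero] at h2
  refine h2.congr' (hne.mono fun ε hε => ?_)
  show -(f ε)⁻¹ * ((f ε * P L (invc c) ε - 1) / ε ^ L)
      = ((f ε)⁻¹ - P L (invc c) ε) / ε ^ L
  rw [mul_div_assoc']
  congr 1
  field_simp
  ring

lemma expN1_shift {b : ℕ → ℝ} (h : expN1 f L b) :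
    expN (fun ε => f ε / ε) L (fun l => b (l + 1)) := by
  unfold expN
  unfold expN1 at h
  refine h.congr' (eps_pos_ev.mono fun ε hε => ?_)
  have hε' : ε ≠ 0 := ne_of_gt hε
  have hIcc : (∑ l ∈ Finset.Icc 1 (L + 1), b l * ε ^ l)
      = ε * ∑ l ∈ Finset.range (L + 1), b (l + 1) * ε ^ l := by
    rw [Finset.mul_sum]
    rw [show Finset.Icc 1 (L+1) = Finset.map ⟨fun n => n + 1, add_left_injective 1⟩
      (Finset.range (L+1)) from ?_]
    · rw [Finset.sum_map]
      refine Finset.sum_congr rfl fun l _ => ?_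
      simp only [Function.Embedding.coeFn_mk]
      ring
    · ext x
      simp only [Finset.mem_Icc, Finset.mem_map, Finset.mem_range, Function.Embedding.coeFn_mk]
      constructor
      · intro hx; exact ⟨x - 1, by omega, by omega⟩
      · rintro ⟨y, hy, rfl⟩; omega
  rw [hIcc]
  rw [show ε ^ (L + 1) = ε * ε ^ L from by ring]
  rw [show f ε - ε * ∑ l ∈ Finset.range (L + 1), b (l + 1) * ε ^ l
      = ε * (f ε / ε - ∑ l ∈ Finset.range (L + 1), b (l + 1) * ε ^ l) from by
    field_simp]
  rw [mul_div_mul_left _ _ hε']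

lemma poly_small : ∀ (L : ℕ) (d : ℕ → ℝ),
    Filter.Tendsto (fun ε : ℝ => (∑ l ∈ Finset.range (L+1), d l * ε ^ l) / ε ^ L)
      (nhdsWithin 0 (Set.Ioi 0)) (nhds 0) → ∀ l ≤ L, d l = 0 := by
  intro L
  induction L with
  | zero =>
    intro d h l hl
    interval_cases l
    have : Filter.Tendsto (fun _ : ℝ => d 0) (nhdsWithin (0:ℝ) (Set.Ioi 0)) (nhds 0) := by
      refine h.congr fun ε => ?_
      simp
    exact tendsto_nhds_unique tendsto_const_nhds this
  | succ L ih =>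
    intro d h l hl
    have hg0 : Filter.Tendsto (fun ε : ℝ => ∑ l ∈ Finset.range (L+2), d l * ε ^ l)
        (nhdsWithin (0:ℝ) (Set.Ioi 0)) (nhds 0) := by
      have hpow : Filter.Tendsto (fun ε : ℝ => ε ^ (L+1)) (nhdsWithin (0:ℝ) (Set.Ioi 0))
          (nhds ((0:ℝ) ^ (L+1))) :=
        ((continuous_pow (L+1)).tendsto 0).mono_left nhdsWithin_le_nhds
      have := h.mul hpow
      rw [zero_mul] at this
      refine this.congr' (eps_pos_ev.mono fun ε hε => ?_)
      field_simp
    have hd0 : d 0 = 0 := by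
      have hgc : Filter.Tendsto (fun ε : ℝ => ∑ l ∈ Finset.range (L+2), d l * ε ^ l)
          (nhdsWithin (0:ℝ) (Set.Ioi 0)) (nhds (d 0)) := P_tendsto (L := L+1) d
      exact (tendsto_nhds_unique hgc hg0)
    have hshift : Filter.Tendsto
        (fun ε : ℝ => (∑ l ∈ Finset.range (L+1), d (l+1) * ε ^ l) / ε ^ L)
        (nhdsWithin (0:ℝ) (Set.Ioi 0)) (nhds 0) := by
      refine h.congr' (eps_pos_ev.mono fun ε hε => ?_)
      have hε' : ε ≠ 0 := ne_of_gt hε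
      rw [Finset.sum_range_succ' (fun l => d l * ε ^ l) (L+1)]
      have : (∑ l ∈ Finset.range (L+1), d (l+1) * ε ^ (l+1)) + d 0 * ε ^ 0
          = ε * ∑ l ∈ Finset.range (L+1), d (l+1) * ε ^ l := by
        rw [hd0, Finset.mul_sum]
        simp only [zero_mul, add_zero]
        refine Finset.sum_congr rfl fun l _ => by ring
      rw [this, show ε ^ (L+1) = ε * ε ^ L from by ring, mul_div_mul_left _ _ hε']
    rcases Nat.eq_zero_or_pos l with rfl | hlpos
    · exact hd0
    · obtain ⟨l', rfl⟩ : ∃ l', l = l' + 1 := ⟨l - 1, by omega⟩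
      exact ih (fun l => d (l+1)) hshift l' (by omega)

lemma expN_unique {c' : ℕ → ℝ} (h1 : expN f L c) (h2 : expN f L c') :
    ∀ l ≤ L, c l = c' l := by
  have h3 := h2.sub h1
  rw [sub_zero] at h3
  have h4 : Filter.Tendsto
      (fun ε : ℝ => (∑ l ∈ Finset.range (L+1), (c l - c' l) * ε ^ l) / ε ^ L)
      (nhdsWithin (0:ℝ) (Set.Ioi 0)) (nhds 0) := by
    refine h3.congr fun ε => ?_
    rw [div_sub_div_same]
    congr 1
    rw [Finset.sum_congr rfl (fun l _ => sub_mul (c l) (c' l) (ε ^ l)),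
      Finset.sum_sub_distrib]
    ring
  intro l hl
  have h5 : c l - c' l = 0 := poly_small L (fun l => c l - c' l) h4 l hl
  linarith


/-- expansion with designated constant term -/
def EE (L : ℕ) (f : ℝ → ℝ) (v : ℝ) : Prop := ∃ c : ℕ → ℝ, expN f L c ∧ c 0 = v

variable {v w : ℝ}

lemma EE_congr (h : ∀ᶠ ε in nhdsWithin (0:ℝ) (Set.Ioi 0), f ε = g ε)
    (hf : EE L f v) : EE L g v := by
  obtain ⟨c, hc, hc0⟩ := hf
  exact ⟨c, expN_congr h hc, hc0⟩

lemma EE_const (r : ℝ) : EE L (fun _ => r) r :=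
  ⟨fun l => if l = 0 then r else 0, expN_const r, rfl⟩

lemma EE_id (hL : 1 ≤ L) : EE L (fun ε => ε) 0 := by
  refine ⟨fun l => if l = 1 then 1 else 0, ?_, rfl⟩
  unfold expN
  have hP : ∀ ε : ℝ, (∑ l ∈ Finset.range (L+1), (if l = 1 then (1:ℝ) else 0) * ε ^ l) = ε := by
    intro ε
    rw [Finset.sum_eq_single 1]
    · simp
    · intro l _ hl; simp [hl]
    · intro h; exact absurd (Finset.mem_range.mpr (by omega)) h
  simp only [hP]
  simpa using tendsto_const_nhds

lemma EE_add (hf : EE L f v) (hg : EE L g w) : EE L (fun ε => f ε + g ε) (v + w) := by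
  obtain ⟨c, hc, hc0⟩ := hf; obtain ⟨d, hd, hd0⟩ := hg
  exact ⟨fun l => c l + d l, expN_add hc hd, by simp only []; rw [hc0, hd0]⟩

lemma EE_mul (hf : EE L f v) (hg : EE L g w) : EE L (fun ε => f ε * g ε) (v * w) := by
  obtain ⟨c, hc, hc0⟩ := hf; obtain ⟨d, hd, hd0⟩ := hg
  exact ⟨conv c d, expN_mul hc hd, by rw [conv_zero, hc0, hd0]⟩

lemma EE_inv (hw : w ≠ 0) (hg : EE L g w) : EE L (fun ε => (g ε)⁻¹) w⁻¹ := by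
  obtain ⟨d, hd, hd0⟩ := hg
  exact ⟨invc d, expN_inv (by rw [hd0]; exact hw) hd, by rw [invc_zero, hd0]⟩

lemma EE_div (hf : EE L f v) (hg : EE L g w) (hw : w ≠ 0) :
    EE L (fun ε => f ε / g ε) (v / w) := by
  have h1 := EE_mul hf (EE_inv hw hg)
  rw [← div_eq_mul_inv] at h1
  refine EE_congr (Eventually.of_forall fun ε => ?_) h1
  rw [div_eq_mul_inv]

lemma EE_sum {ι : Type*} {s : Finset ι} {F : ι → ℝ → ℝ} {V : ι → ℝ}
    (h : ∀ i ∈ s, EE L (F i) (V i)) :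
    EE L (fun ε => ∑ i ∈ s, F i ε) (∑ i ∈ s, V i) := by
  classical
  induction s using Finset.induction_on with
  | empty => simpa using EE_const 0
  | @insert x s' hx ih =>
    simp only [Finset.sum_insert hx]
    exact EE_add (h x (Finset.mem_insert_self x s'))
      (ih fun i hi => h i (Finset.mem_insert_of_mem hi))

lemma EE_prod {s : Finset ℕ} {F : ℕ → ℝ → ℝ} {V : ℕ → ℝ}
    (h : ∀ i ∈ s, EE L (F i) (V i)) :
    EE L (fun ε => ∏ i ∈ s, F i ε) (∏ i ∈ s, V i) := by
  classical
  induction s using Finset.induction_on with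
  | empty => simpa using EE_const 1
  | @insert x s' hx ih =>
    simp only [Finset.prod_insert hx]
    exact EE_mul (h x (Finset.mem_insert_self x s'))
      (ih fun i hi => h i (Finset.mem_insert_of_mem hi))


end Th5

/-- Theorem 5(iii), scenario H₂, order `L`: under conditions (D_L, E_L, H₂), each
conditional quasi-stationary probability admits an asymptotic expansion
`π̃_i(ε) = ∑_{l=0}^{L} c̃_i[l] ε^l + o(ε^L)` with `c̃_i[0] > 0`,
`∑_{i=1}^{N} c̃_i[0] = 1` and `∑_{i=1}^{N} c̃_i[l] = 0` for `1 ≤ l ≤ L`. -/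
theorem theorem5_iii_H2
    (N : ℕ) (hN : 1 ≤ N) (ε₀ : ℝ) (hε₀ : 0 < ε₀) (hε₁ : ε₀ ≤ 1)
    (L : ℕ) (hL : 1 ≤ L)
    (p e : ℕ → Bool → ℝ → ℝ)
    (hpos : ∀ i ≤ N, ∀ σ : Bool, ∀ ε ∈ Set.Ioc (0 : ℝ) ε₀, 0 < p i σ ε ∧ 0 < e i σ ε)
    (hone : ∀ i ≤ N, ∀ ε ∈ Set.Ioc (0 : ℝ) ε₀, p i false ε + p i true ε = 1)
    (a b : ℕ → Bool → ℕ → ℝ)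
    (hD : ∀ i ≤ N, ∀ σ : Bool, ¬(i = 0 ∧ σ = true) →
      0 < a i σ 0 ∧ expN (p i σ) L (a i σ))
    (hD0 : 0 < a 0 true 1 ∧ expN1 (p 0 true) L (a 0 true))
    (hE : ∀ i ≤ N, ∀ σ : Bool, ¬(i = 0 ∧ σ = true) →
      0 < b i σ 0 ∧ expN (e i σ) L (b i σ))
    (hE0 : 0 < b 0 true 1 ∧ expN1 (e 0 true) L (b 0 true)) :
    ∃ ct : ℕ → ℕ → ℝ,
      (∀ i, 1 ≤ i → i ≤ N → expN (qPi p e N i) L (ct i) ∧ 0 < ct i 0) ∧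
      (∑ i ∈ Finset.Icc 1 N, ct i 0 = 1) ∧
      (∀ l, 1 ≤ l → l ≤ L → ∑ i ∈ Finset.Icc 1 N, ct i l = 0) := by
  classical
  have hIoc : Set.Ioc (0:ℝ) ε₀ ∈ nhdsWithin (0:ℝ) (Set.Ioi 0) :=
    Ioc_mem_nhdsGT_of_mem ⟨le_refl 0, hε₀⟩
  -- positivity on the interval
  have hppos : ∀ i, i ≤ N → ∀ σ : Bool, ∀ ε ∈ Set.Ioc (0:ℝ) ε₀, 0 < p i σ ε :=
    fun i hi σ ε hε => (hpos i hi σ ε hε).1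
  have hepos : ∀ i, i ≤ N → ∀ σ : Bool, ∀ ε ∈ Set.Ioc (0:ℝ) ε₀, 0 < e i σ ε :=
    fun i hi σ ε hε => (hpos i hi σ ε hε).2
  have hGampos : ∀ σ : Bool, ∀ i j, j ≤ N → ∀ ε ∈ Set.Ioc (0:ℝ) ε₀, 0 < Gam p σ i j ε := by
    intro σ i j hj ε hε
    exact Finset.prod_pos fun m hm =>
      hppos m (le_trans (Finset.mem_Icc.mp hm).2 hj) σ ε hε
  have heTpos : ∀ i, i ≤ N → ∀ ε ∈ Set.Ioc (0:ℝ) ε₀, 0 < eT e i ε := fun i hi ε hε =>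
    add_pos (hepos i hi false ε hε) (hepos i hi true ε hε)
  have hretpos : ∀ j, j ≤ N → ∀ ε ∈ Set.Ioc (0:ℝ) ε₀, 0 < ret p e N j ε := by
    intro j hj ε hε
    have t1 := heTpos j hj ε hε
    have t2 : (0:ℝ) ≤ ∑ k ∈ Finset.range j,
        eT e k ε * (Gam p false (k+1) j ε / Gam p true k (j-1) ε) := by
      refine Finset.sum_nonneg fun k hk => ?_
      have hk' := Finset.mem_range.mp hk
      exact le_of_lt (mul_pos (heTpos k (by omega) ε hε)
        (div_pos (hGampos false (k+1) j hj ε hε) (hGampos true k (j-1) (by omega) ε hε)))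
    have t3 : (0:ℝ) ≤ ∑ k ∈ Finset.Icc (j+1) N,
        eT e k ε * (Gam p true j (k-1) ε / Gam p false (j+1) k ε) := by
      refine Finset.sum_nonneg fun k hk => ?_
      have hk' := Finset.mem_Icc.mp hk
      exact le_of_lt (mul_pos (heTpos k hk'.2 ε hε)
        (div_pos (hGampos true j (k-1) (by omega) ε hε) (hGampos false (j+1) k hk'.2 ε hε)))
    unfold ret
    linarith
  -- EE facts for the data
  have hp' : ∀ i, i ≤ N → ∀ σ : Bool, ¬(i = 0 ∧ σ = true) → Th5.EE L (p i σ) (a i σ 0) :=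
    fun i hi σ h => ⟨a i σ, (hD i hi σ h).2, rfl⟩
  have he' : ∀ i, i ≤ N → ∀ σ : Bool, ¬(i = 0 ∧ σ = true) → Th5.EE L (e i σ) (b i σ 0) :=
    fun i hi σ h => ⟨b i σ, (hE i hi σ h).2, rfl⟩
  have hq0 : Th5.EE L (fun ε => p 0 true ε / ε) (a 0 true 1) :=
    ⟨fun l => a 0 true (l+1), Th5.expN1_shift hD0.2, rfl⟩
  have he0T : Th5.EE L (e 0 true) 0 := by
    have h2 : Th5.EE L (fun ε => e 0 true ε / ε) (b 0 true 1) :=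
      ⟨fun l => b 0 true (l+1), Th5.expN1_shift hE0.2, rfl⟩
    have h1 := Th5.EE_mul (Th5.EE_id hL) h2
    rw [zero_mul] at h1
    refine Th5.EE_congr (Th5.eps_pos_ev.mono fun ε hε => ?_) h1
    show ε * (e 0 true ε / ε) = e 0 true ε
    field_simp
  set vE : ℕ → ℝ := fun i => if i = 0 then b 0 false 0 else bT b i 0 with hvE
  have heT : ∀ i, i ≤ N → Th5.EE L (eT e i) (vE i) := by
    intro i hi
    rcases Nat.eq_zero_or_pos i with rfl | hipos
    · have h1 := Th5.EE_add (he' 0 hi false (by simp)) he0T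
      rw [add_zero] at h1
      have hv : vE 0 = b 0 false 0 := by simp [hvE]
      rw [hv]
      exact h1
    · have h1 := Th5.EE_add (he' i hi false (by simp))
        (he' i hi true (by rintro ⟨h0, -⟩; omega))
      have hv : vE i = b i false 0 + b i true 0 := by
        simp only [hvE]
        rw [if_neg (by omega)]
        rfl
      rw [hv]
      exact h1
  have hvEpos : ∀ i, i ≤ N → 0 < vE i := by
    intro i hi
    rcases Nat.eq_zero_or_pos i with rfl | hipos
    · have := (hE 0 hi false (by simp)).1
      simpa [hvE] using this
    · have h1 := (hE i hi false (by simp)).1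
      have h2 := (hE i hi true (by rintro ⟨h0, -⟩; omega)).1
      have hv : vE i = b i false 0 + b i true 0 := by
        simp only [hvE]
        rw [if_neg (by omega)]
        rfl
      rw [hv]
      linarith
  have haPos : ∀ m, m ≤ N → ∀ σ : Bool, ¬(m = 0 ∧ σ = true) → 0 < a m σ 0 :=
    fun m hm σ h => (hD m hm σ h).1
  have hGamF : ∀ i j, j ≤ N →
      Th5.EE L (Gam p false i j) (∏ m ∈ Finset.Icc i j, a m false 0) := by
    intro i j hj
    exact Th5.EE_prod (fun m hm =>
      hp' m (le_trans (Finset.mem_Icc.mp hm).2 hj) false (by simp))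
  have hGamT : ∀ i j, 1 ≤ i → j ≤ N →
      Th5.EE L (Gam p true i j) (∏ m ∈ Finset.Icc i j, a m true 0) := by
    intro i j hi hj
    refine Th5.EE_prod (fun m hm =>
      hp' m (le_trans (Finset.mem_Icc.mp hm).2 hj) true ?_)
    have := (Finset.mem_Icc.mp hm).1
    rintro ⟨h0, -⟩; omega
  have hGFpos : ∀ i j, j ≤ N → 0 < ∏ m ∈ Finset.Icc i j, a m false 0 := fun i j hj =>
    Finset.prod_pos fun m hm =>
      haPos m (le_trans (Finset.mem_Icc.mp hm).2 hj) false (by simp)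
  have hGTpos : ∀ i j, 1 ≤ i → j ≤ N → 0 < ∏ m ∈ Finset.Icc i j, a m true 0 := by
    intro i j hi hj
    refine Finset.prod_pos fun m hm => ?_
    have hm' := Finset.mem_Icc.mp hm
    exact haPos m (le_trans hm'.2 hj) true (by rintro ⟨h0, -⟩; omega)
  set Vf : ℕ → ℝ := fun j =>
    vE 0 * (∏ m ∈ Finset.Icc 1 j, a m false 0)
      / (a 0 true 1 * ∏ m ∈ Finset.Icc 1 (j-1), a m true 0) with hVf
  have hVfpos : ∀ j, j ≤ N → 0 < Vf j := by
    intro j hj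
    simp only [hVf]
    exact div_pos (mul_pos (hvEpos 0 (Nat.zero_le N)) (hGFpos 1 j hj))
      (mul_pos hD0.1 (hGTpos 1 (j-1) le_rfl (by omega)))
  have hF : ∀ j, 1 ≤ j → j ≤ N → Th5.EE L (fun ε => ε * ret p e N j ε) (Vf j) := by
    intro j hj1 hjN
    have hterm0 : Th5.EE L
        (fun ε => eT e 0 ε * Gam p false 1 j ε / ((p 0 true ε / ε) * Gam p true 1 (j-1) ε))
        (Vf j) := by
      simp only [hVf]
      exact Th5.EE_div (Th5.EE_mul (heT 0 (Nat.zero_le N)) (hGamF 1 j hjN))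
        (Th5.EE_mul hq0 (hGamT 1 (j-1) le_rfl (by omega)))
        (ne_of_gt (mul_pos hD0.1 (hGTpos 1 (j-1) le_rfl (by omega))))
    have hlow : ∀ k ∈ Finset.Ico 1 j, Th5.EE L
        (fun ε => ε * (eT e k ε * (Gam p false (k+1) j ε / Gam p true k (j-1) ε))) 0 := by
      intro k hk
      have hk' := Finset.mem_Ico.mp hk
      have h1 := Th5.EE_mul (Th5.EE_id hL) (Th5.EE_mul (heT k (by omega))
        (Th5.EE_div (hGamF (k+1) j hjN) (hGamT k (j-1) hk'.1 (by omega))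
          (ne_of_gt (hGTpos k (j-1) hk'.1 (by omega)))))
      rw [zero_mul] at h1
      exact h1
    have hhigh : ∀ k ∈ Finset.Icc (j+1) N, Th5.EE L
        (fun ε => ε * (eT e k ε * (Gam p true j (k-1) ε / Gam p false (j+1) k ε))) 0 := by
      intro k hk
      have hk' := Finset.mem_Icc.mp hk
      have h1 := Th5.EE_mul (Th5.EE_id hL) (Th5.EE_mul (heT k hk'.2)
        (Th5.EE_div (hGamT j (k-1) hj1 (by omega)) (hGamF (j+1) k hk'.2)
          (ne_of_gt (hGFpos (j+1) k hk'.2))))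
      rw [zero_mul] at h1
      exact h1
    have hT0 : Th5.EE L (fun ε => ε * eT e j ε) 0 := by
      have h1 := Th5.EE_mul (Th5.EE_id hL) (heT j hjN)
      rw [zero_mul] at h1
      exact h1
    have hall := Th5.EE_add (Th5.EE_add (Th5.EE_add hterm0 (Th5.EE_sum hlow)) hT0)
      (Th5.EE_sum hhigh)
    simp only [Finset.sum_const_zero, add_zero] at hall
    refine Th5.EE_congr ?_ hall
    filter_upwards [hIoc] with ε hε
    have hεp : 0 < ε := hε.1
    have hq := hppos 0 (Nat.zero_le N) true ε hε
    have hB := hGampos true 1 (j-1) (by omega) ε hε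
    have hsplit : Gam p true 0 (j-1) ε = p 0 true ε * Gam p true 1 (j-1) ε := by
      unfold Gam
      rw [show Finset.Icc 0 (j-1) = insert 0 (Finset.Icc 1 (j-1)) from by
        ext x; simp only [Finset.mem_Icc, Finset.mem_insert]; omega]
      rw [Finset.prod_insert (by simp)]
    show eT e 0 ε * Gam p false 1 j ε / ((p 0 true ε / ε) * Gam p true 1 (j-1) ε)
        + (∑ k ∈ Finset.Ico 1 j, ε * (eT e k ε * (Gam p false (k+1) j ε / Gam p true k (j-1) ε)))
        + ε * eT e j ε
        + (∑ k ∈ Finset.Icc (j+1) N, ε * (eT e k ε * (Gam p true j (k-1) ε / Gam p false (j+1) k ε)))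
        = ε * ret p e N j ε
    unfold ret
    rw [mul_add, mul_add, Finset.mul_sum, Finset.mul_sum]
    rw [Finset.range_eq_Ico, Finset.sum_eq_sum_Ico_succ_bot (by omega : 0 < j)]
    have h0term : ε * (eT e 0 ε * (Gam p false (0+1) j ε / Gam p true 0 (j-1) ε))
        = eT e 0 ε * Gam p false 1 j ε / ((p 0 true ε / ε) * Gam p true 1 (j-1) ε) := by
      rw [hsplit]
      rw [show (0:ℕ)+1 = 1 from rfl]
      field_simp
    rw [h0term]
    ring
  set u : ℕ → ℝ := fun j => vE j / Vf j with hu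
  have hupos : ∀ j, 1 ≤ j → j ≤ N → 0 < u j := by
    intro j h1 h2
    simp only [hu]
    exact div_pos (hvEpos j h2) (hVfpos j h2)
  have hSU : 0 < ∑ j ∈ Finset.Icc 1 N, u j := by
    refine Finset.sum_pos (fun j hj => ?_) ⟨1, Finset.mem_Icc.mpr ⟨le_rfl, hN⟩⟩
    have hj' := Finset.mem_Icc.mp hj
    exact hupos j hj'.1 hj'.2
  have hqPiEE : ∀ i, 1 ≤ i → i ≤ N →
      Th5.EE L (qPi p e N i) (u i / ∑ j ∈ Finset.Icc 1 N, u j) := by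
    intro i h1 h2
    have hGi : Th5.EE L (fun ε => eT e i ε / (ε * ret p e N i ε)) (u i) := by
      simp only [hu]
      exact Th5.EE_div (heT i h2) (hF i h1 h2) (ne_of_gt (hVfpos i h2))
    have hSum : Th5.EE L (fun ε => ∑ j ∈ Finset.Icc 1 N, eT e j ε / (ε * ret p e N j ε))
        (∑ j ∈ Finset.Icc 1 N, u j) := by
      refine Th5.EE_sum (fun j hj => ?_)
      have hj' := Finset.mem_Icc.mp hj
      simp only [hu]
      exact Th5.EE_div (heT j hj'.2) (hF j hj'.1 hj'.2) (ne_of_gt (hVfpos j hj'.2))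
    have hfinal := Th5.EE_div hGi hSum (ne_of_gt hSU)
    refine Th5.EE_congr ?_ hfinal
    filter_upwards [hIoc] with ε hε
    have hεp : 0 < ε := hε.1
    have hεne : ε ≠ 0 := ne_of_gt hεp
    have hstat : ∀ j, j ≤ N → eT e j ε / (ε * ret p e N j ε) = statPi p e N j ε / ε := by
      intro j hj
      unfold statPi
      rw [div_div, mul_comm]
    show eT e i ε / (ε * ret p e N i ε)
        / (∑ j ∈ Finset.Icc 1 N, eT e j ε / (ε * ret p e N j ε)) = qPi p e N i ε
    rw [hstat i h2,
      Finset.sum_congr rfl (fun j hj => hstat j (Finset.mem_Icc.mp hj).2),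
      ← Finset.sum_div]
    unfold qPi
    rw [div_div]
    congr 1
    rw [mul_div_assoc']
    rw [mul_comm]
    rw [mul_div_assoc]
    rw [div_self hεne, mul_one]
  have key : ∀ i : ℕ, ∃ c : ℕ → ℝ,
      (1 ≤ i → i ≤ N → expN (qPi p e N i) L c ∧ c 0 = u i / ∑ j ∈ Finset.Icc 1 N, u j) := by
    intro i
    by_cases h : 1 ≤ i ∧ i ≤ N
    · obtain ⟨c, hc, hc0⟩ := hqPiEE i h.1 h.2
      exact ⟨c, fun _ _ => ⟨hc, hc0⟩⟩
    · exact ⟨fun _ => 0, fun h1 h2 => absurd ⟨h1, h2⟩ h⟩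
  choose ct hct using key
  have hmem : ∀ i ∈ Finset.Icc 1 N, 1 ≤ i ∧ i ≤ N := fun i hi => Finset.mem_Icc.mp hi
  have hsum1 : ∀ᶠ ε in nhdsWithin (0:ℝ) (Set.Ioi 0),
      (∑ i ∈ Finset.Icc 1 N, qPi p e N i ε) = 1 := by
    filter_upwards [hIoc] with ε hε
    have hBpos : 0 < ∑ j ∈ Finset.Icc 1 N, statPi p e N j ε := by
      refine Finset.sum_pos (fun j hj => ?_) ⟨1, Finset.mem_Icc.mpr ⟨le_rfl, hN⟩⟩
      exact div_pos (heTpos j (hmem j hj).2 ε hε) (hretpos j (hmem j hj).2 ε hε)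
    unfold qPi
    rw [← Finset.sum_div, div_self (ne_of_gt hBpos)]
  have hexpsum : expN (fun ε => ∑ i ∈ Finset.Icc 1 N, qPi p e N i ε) L
      (fun l => ∑ i ∈ Finset.Icc 1 N, ct i l) :=
    Th5.expN_sum (fun i hi => ((hct i) (hmem i hi).1 (hmem i hi).2).1)
  have hconst1 : expN (fun _ : ℝ => (1:ℝ)) L (fun l => ∑ i ∈ Finset.Icc 1 N, ct i l) :=
    Th5.expN_congr hsum1 hexpsum
  have huniq := Th5.expN_unique hconst1 (Th5.expN_const 1)
  refine ⟨ct, ?_, ?_, ?_⟩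
  · intro i h1 h2
    refine ⟨(hct i h1 h2).1, ?_⟩
    rw [(hct i h1 h2).2]
    exact div_pos (hupos i h1 h2) hSU
  · have h0 : (∑ i ∈ Finset.Icc 1 N, ct i 0) = if 0 = 0 then (1:ℝ) else 0 :=
      huniq 0 (Nat.zero_le L)
    simpa using h0
  · intro l hl1 hl2
    have h0 : (∑ i ∈ Finset.Icc 1 N, ct i l) = if l = 0 then (1:ℝ) else 0 := huniq l hl2
    rw [if_neg (by omega)] at h0
    exact h0
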